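/- arXiv:1405.3860 — 2 statements merged into one kernel-verified Lean document; each statement's English description precedes it below -/
import Mathlib

section
/- Consider a spatial spectrum access game on an arbitrary undirected interference graph with the Aloha mechanism: each player n has contention probability p_n ∈ (0,1), and player n's payoff under profile a is U_n(a) = θ_{a_n}·B_{a_n}^n·p_n·∏_{i ∈ 𝒩_n^{a_n}(a)} (1 − p_i), where 𝒩_n^m(a) = {i ∈ 𝒩_n : a_i = m}. Then Φ(a) = Σ_{i=1}^N (−ln(1 − p_i))·( (1/2)·Σ_{j ∈ 𝒩_i^{a_i}(a)} ln(1 − p_j) + ln(θ_{a_i}·B_{a_i}^i·p_i) ) is an ordinal potential for the game, and consequently the game has a pure Nash equilibrium. -/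
private lemma sign_mul_pos' {c x : ℝ} (hc : 0 < c) :
    Real.sign (c * x) = Real.sign x := by
  rcases lt_trichotomy x 0 with h | h | h
  · rw [Real.sign_of_neg h, Real.sign_of_neg (mul_neg_of_pos_of_neg hc h)]
  · simp [h]
  · rw [Real.sign_of_pos h, Real.sign_of_pos (mul_pos hc h)]

private lemma sign_log_sub' {u v : ℝ} (hu : 0 < u) (hv : 0 < v) :
    Real.sign (Real.log u - Real.log v) = Real.sign (u - v) := by
  rcases lt_trichotomy u v with h | h | h
  · rw [Real.sign_of_neg (by linarith : u - v < 0),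
      Real.sign_of_neg (sub_neg.mpr ((Real.log_lt_log_iff hu hv).mpr h))]
  · simp [h]
  · rw [Real.sign_of_pos (by linarith : 0 < u - v),
      Real.sign_of_pos (sub_pos.mpr ((Real.log_lt_log_iff hv hu).mpr h))]

/-- Aloha spatial spectrum access game on an arbitrary undirected interference graph:
`Φ(a) = Σᵢ (−ln(1−pᵢ))·((1/2)·Σ_{j∈𝒩ᵢ^{aᵢ}(a)} ln(1−pⱼ) + ln(θ_{aᵢ} B_{aᵢ}ⁱ pᵢ))`
is an ordinal potential, and the game has a pure Nash equilibrium. -/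
theorem stmt_11 (N M : ℕ)
    (𝒩 : Fin (N + 1) → Finset (Fin (N + 1)))
    (hself : ∀ n, n ∉ 𝒩 n)
    -- undirected interference graph:
    (hsym : ∀ i j, i ∈ 𝒩 j ↔ j ∈ 𝒩 i)
    (θ : Fin (M + 1) → ℝ) (hθ : ∀ m, 0 < θ m ∧ θ m < 1)
    (B : Fin (M + 1) → Fin (N + 1) → ℝ) (hB : ∀ m n, 0 < B m n)
    (p : Fin (N + 1) → ℝ) (hp : ∀ n, 0 < p n ∧ p n < 1)
    (U : (Fin (N + 1) → Fin (M + 1)) → Fin (N + 1) → ℝ)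
    (hU : ∀ a n, U a n = θ (a n) * B (a n) n * p n *
      ∏ i ∈ (𝒩 n).filter (fun i => a i = a n), (1 - p i))
    (Φ : (Fin (N + 1) → Fin (M + 1)) → ℝ)
    (hΦ : ∀ a, Φ a = ∑ i, (-(Real.log (1 - p i))) *
      ((1 / 2) * (∑ j ∈ (𝒩 i).filter (fun j => a j = a i), Real.log (1 - p j)) +
        Real.log (θ (a i) * B (a i) i * p i))) :
    (∀ (n : Fin (N + 1)) (a : Fin (N + 1) → Fin (M + 1)) (m : Fin (M + 1)),
      Real.sign (Φ (Function.update a n m) - Φ a) =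
        Real.sign (U (Function.update a n m) n - U a n)) ∧
    ∃ a : Fin (N + 1) → Fin (M + 1), ∀ (n : Fin (N + 1)) (m : Fin (M + 1)),
      U (Function.update a n m) n ≤ U a n := by
  classical
  have hp1 : ∀ i, (0:ℝ) < 1 - p i := fun i => by linarith [(hp i).2]
  set ℓ : Fin (N + 1) → ℝ := fun i => Real.log (1 - p i) with hℓdef
  have hw : ∀ i, 0 < -ℓ i := by
    intro i
    have : ℓ i < 0 := Real.log_neg (hp1 i) (by linarith [(hp i).1])
    linarith
  have hcpos : ∀ (n : Fin (N+1)) (c : Fin (M+1)), 0 < θ c * B c n * p n := fun n c =>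
    mul_pos (mul_pos (hθ c).1 (hB c n)) (hp n).1
  have hUpos : ∀ a n, 0 < U a n := by
    intro a n
    rw [hU]
    exact mul_pos (hcpos n (a n)) (Finset.prod_pos fun i _ => hp1 i)
  have hlogU : ∀ a n, Real.log (U a n) = Real.log (θ (a n) * B (a n) n * p n)
      + ∑ j ∈ (𝒩 n).filter (fun j => a j = a n), ℓ j := by
    intro a n
    rw [hU, Real.log_mul (ne_of_gt (hcpos n (a n)))
      (ne_of_gt (Finset.prod_pos fun i _ => hp1 i)),
      Real.log_prod (fun i _ => ne_of_gt (hp1 i))]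
  -- rewrite Φ into a separated form
  have hΦ' : ∀ a, Φ a = (∑ i, (-ℓ i) * Real.log (θ (a i) * B (a i) i * p i))
      + ∑ i, ∑ j ∈ 𝒩 i, (if a j = a i then (1/2) * (-ℓ i) * ℓ j else 0) := by
    intro a
    rw [hΦ, ← Finset.sum_add_distrib]
    refine Finset.sum_congr rfl fun i _ => ?_
    have h : ∑ j ∈ 𝒩 i, (if a j = a i then (1/2) * (-ℓ i) * ℓ j else 0)
        = (1/2) * (-ℓ i) * ∑ j ∈ (𝒩 i).filter (fun j => a j = a i), ℓ j := by
      rw [Finset.sum_filter, Finset.mul_sum]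
      refine Finset.sum_congr rfl fun j _ => ?_
      split <;> ring
    rw [h]
    ring
  -- the key identity
  have key : ∀ (n : Fin (N+1)) (a : Fin (N+1) → Fin (M+1)) (m : Fin (M+1)),
      Φ (Function.update a n m) - Φ a
        = (-ℓ n) * (Real.log (U (Function.update a n m) n) - Real.log (U a n)) := by
    intro n a m
    set b := Function.update a n m with hb
    have hbn : b n = m := Function.update_self n m a
    have hbi : ∀ i : Fin (N+1), i ≠ n → b i = a i := fun i hi => Function.update_of_ne hi m a
    have hne : ∀ j, j ∈ 𝒩 n → j ≠ n := fun j hj h => hself n (h ▸ hj)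
    set T : Fin (M+1) → ℝ := fun c => ∑ j ∈ 𝒩 n, (if a j = c then ℓ j else 0) with hT
    have hTf : ∀ c : Fin (M+1), ∑ j ∈ (𝒩 n).filter (fun j => a j = c), ℓ j = T c := by
      intro c; rw [hT, Finset.sum_filter]
    have h1 : Real.log (U b n) = Real.log (θ m * B m n * p n) + T m := by
      rw [hlogU b n, hbn, ← hTf m]
      congr 1
      refine Finset.sum_congr ?_ fun j _ => rfl
      exact Finset.filter_congr fun j hj => by rw [hbi j (hne j hj)]
    have h2 : Real.log (U a n) = Real.log (θ (a n) * B (a n) n * p n) + T (a n) := by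
      rw [hlogU a n, hTf (a n)]
    -- Part 1
    have part1 : (∑ i, (-ℓ i) * Real.log (θ (b i) * B (b i) i * p i))
        - (∑ i, (-ℓ i) * Real.log (θ (a i) * B (a i) i * p i))
        = (-ℓ n) * (Real.log (θ m * B m n * p n) - Real.log (θ (a n) * B (a n) n * p n)) := by
      rw [← Finset.sum_sub_distrib]
      rw [Finset.sum_eq_single n
        (fun i _ hi => by rw [hbi i hi]; ring)
        (fun h => absurd (Finset.mem_univ n) h)]
      rw [hbn]; ring
    -- Part 2
    have part2 : (∑ i, ∑ j ∈ 𝒩 i, (if b j = b i then (1/2) * (-ℓ i) * ℓ j else 0))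
        - (∑ i, ∑ j ∈ 𝒩 i, (if a j = a i then (1/2) * (-ℓ i) * ℓ j else 0))
        = (-ℓ n) * (T m - T (a n)) := by
      rw [← Finset.sum_sub_distrib]
      set F : Fin (N+1) → ℝ := fun i =>
        (∑ j ∈ 𝒩 i, (if b j = b i then (1/2) * (-ℓ i) * ℓ j else 0))
          - ∑ j ∈ 𝒩 i, (if a j = a i then (1/2) * (-ℓ i) * ℓ j else 0) with hF
      have hFn : F n = (1/2) * (-ℓ n) * (T m - T (a n)) := by
        rw [hF]
        have e1 : ∑ j ∈ 𝒩 n, (if b j = b n then (1/2) * (-ℓ n) * ℓ j else 0)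
            = (1/2) * (-ℓ n) * T m := by
          rw [hT, Finset.mul_sum]
          refine Finset.sum_congr rfl fun j hj => ?_
          rw [hbn, hbi j (hne j hj)]
          split <;> ring
        have e2 : ∑ j ∈ 𝒩 n, (if a j = a n then (1/2) * (-ℓ n) * ℓ j else 0)
            = (1/2) * (-ℓ n) * T (a n) := by
          rw [hT, Finset.mul_sum]
          refine Finset.sum_congr rfl fun j _ => ?_
          split <;> ring
        simp only
        rw [e1, e2]; ring
      have hFrest : ∑ i ∈ Finset.univ.erase n, F i
          = (1/2) * (-ℓ n) * (T m - T (a n)) := by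
        have step : ∀ i ∈ Finset.univ.erase n,
            F i = (if i ∈ 𝒩 n then
                ((if a i = m then (1/2) * (-ℓ n) * ℓ i else 0)
                  - (if a i = a n then (1/2) * (-ℓ n) * ℓ i else 0)) else 0) := by
          intro i hi
          have hin : i ≠ n := Finset.ne_of_mem_erase hi
          rw [hF]
          simp only
          rw [← Finset.sum_sub_distrib]
          have heach : ∀ j ∈ 𝒩 i,
              ((if b j = b i then (1/2) * (-ℓ i) * ℓ j else 0)
                - (if a j = a i then (1/2) * (-ℓ i) * ℓ j else 0))
              = (if j = n then
                  ((if a i = m then (1/2) * (-ℓ n) * ℓ i else 0)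
                    - (if a i = a n then (1/2) * (-ℓ n) * ℓ i else 0)) else 0) := by
            intro j _
            by_cases hjn : j = n
            · rw [if_pos hjn, hjn, hbn, hbi i hin]
              have c1 : (if m = a i then (1/2) * (-ℓ i) * ℓ n else 0)
                  = (if a i = m then (1/2) * (-ℓ n) * ℓ i else 0) := by
                by_cases h : a i = m
                · rw [if_pos h.symm, if_pos h]; ring
                · rw [if_neg (fun hh => h hh.symm), if_neg h]
              have c2 : (if a n = a i then (1/2) * (-ℓ i) * ℓ n else 0)
                  = (if a i = a n then (1/2) * (-ℓ n) * ℓ i else 0) := by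
                by_cases h : a i = a n
                · rw [if_pos h.symm, if_pos h]; ring
                · rw [if_neg (fun hh => h hh.symm), if_neg h]
              rw [c1, c2]
            · rw [if_neg hjn, hbi j hjn, hbi i hin, sub_self]
          rw [Finset.sum_congr rfl heach, Finset.sum_ite_eq' (𝒩 i) n]
          exact if_congr (hsym n i) rfl rfl
        rw [Finset.sum_congr rfl step, Finset.sum_ite_mem]
        have hint : (Finset.univ.erase n) ∩ 𝒩 n = 𝒩 n := by
          ext i
          simp only [Finset.mem_inter, Finset.mem_erase, Finset.mem_univ, and_true, true_and]
          exact ⟨fun h => h.2, fun h => ⟨hne i h, h⟩⟩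
        rw [hint, Finset.sum_sub_distrib]
        have e1 : ∑ i ∈ 𝒩 n, (if a i = m then (1/2) * (-ℓ n) * ℓ i else 0)
            = (1/2) * (-ℓ n) * T m := by
          rw [hT, Finset.mul_sum]
          refine Finset.sum_congr rfl fun i _ => ?_
          split <;> ring
        have e2 : ∑ i ∈ 𝒩 n, (if a i = a n then (1/2) * (-ℓ n) * ℓ i else 0)
            = (1/2) * (-ℓ n) * T (a n) := by
          rw [hT, Finset.mul_sum]
          refine Finset.sum_congr rfl fun i _ => ?_
          split <;> ring
        rw [e1, e2]; ring
      have hgoal : (∑ i, F i) = (-ℓ n) * (T m - T (a n)) := by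
        rw [← Finset.sum_erase_add Finset.univ F (Finset.mem_univ n), hFrest, hFn]
        ring
      exact hgoal
    rw [hΦ' b, hΦ' a, h1, h2]
    have : (∑ i, (-ℓ i) * Real.log (θ (b i) * B (b i) i * p i))
        + (∑ i, ∑ j ∈ 𝒩 i, (if b j = b i then (1/2) * (-ℓ i) * ℓ j else 0))
        - ((∑ i, (-ℓ i) * Real.log (θ (a i) * B (a i) i * p i))
        + (∑ i, ∑ j ∈ 𝒩 i, (if a j = a i then (1/2) * (-ℓ i) * ℓ j else 0)))
        = ((∑ i, (-ℓ i) * Real.log (θ (b i) * B (b i) i * p i))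
          - (∑ i, (-ℓ i) * Real.log (θ (a i) * B (a i) i * p i)))
        + ((∑ i, ∑ j ∈ 𝒩 i, (if b j = b i then (1/2) * (-ℓ i) * ℓ j else 0))
          - (∑ i, ∑ j ∈ 𝒩 i, (if a j = a i then (1/2) * (-ℓ i) * ℓ j else 0))) := by ring
    rw [this, part1, part2]
    ring
  constructor
  · intro n a m
    rw [key n a m, sign_mul_pos' (hw n), sign_log_sub' (hUpos _ _) (hUpos _ _)]
  · obtain ⟨a, ha⟩ := Finite.exists_max Φ
    refine ⟨a, fun n m => ?_⟩
    have h2 : Φ (Function.update a n m) - Φ a ≤ 0 := by linarith [ha (Function.update a n m)]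
    rw [key n a m] at h2
    have h3 : Real.log (U (Function.update a n m) n) ≤ Real.log (U a n) := by
      nlinarith [hw n]
    exact (Real.log_le_log_iff (hUpos _ _) (hUpos _ _)).mp h3
end

section
/- The Boltzmann (softmax) map with temperature γ is Lipschitz with constant γ in the maximum norm: for every γ > 0, every M ≥ 1, every pair of vectors P, P̂ ∈ ℝ^M, and every index m ∈ {1,…,M}, | exp(γ P_m)/Σ_{m'=1}^M exp(γ P_{m'}) − exp(γ P̂_m)/Σ_{m'=1}^M exp(γ P̂_{m'}) | ≤ γ·max_{1 ≤ m' ≤ M} |P_{m'} − P̂_{m'}|. -/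
lemma aux_exp (x : ℝ) (hx : 0 ≤ x) : 2 * (Real.exp x - 1) ≤ x * (Real.exp x + 1) := by
  set g : ℝ → ℝ := fun t => t * Real.exp t + t - 2 * Real.exp t + 2 with hg
  have hd : ∀ t : ℝ, HasDerivAt g ((t - 1) * Real.exp t + 1) t := by
    intro t
    have h1 := ((((hasDerivAt_id t).mul (Real.hasDerivAt_exp t)).add (hasDerivAt_id t)).sub
        ((Real.hasDerivAt_exp t).const_mul 2)).add_const 2
    simp only [id] at h1
    exact h1.congr_deriv (by ring)
  have hder : ∀ t : ℝ, 0 ≤ t → 0 ≤ (t - 1) * Real.exp t + 1 := by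
    intro t ht
    have h1 : (1 - t) ≤ Real.exp (-t) := by
      have := Real.add_one_le_exp (-t); linarith
    have h2 : (1 - t) * Real.exp t ≤ 1 := by
      have := mul_le_mul_of_nonneg_right h1 (Real.exp_pos t).le
      rwa [Real.exp_neg, inv_mul_cancel₀ (Real.exp_pos t).ne'] at this
    nlinarith
  have hmono : MonotoneOn g (Set.Ici (0:ℝ)) := by
    apply monotoneOn_of_deriv_nonneg (convex_Ici 0)
    · exact (Continuous.continuousOn (by continuity))
    · intro t _
      exact (hd t).differentiableAt.differentiableWithinAt
    · intro t ht
      rw [interior_Ici] at ht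
      rw [(hd t).deriv]
      exact hder t (le_of_lt ht)
  have h0 : g 0 ≤ g x := hmono (by simp) (by simpa using hx) hx
  simp only [hg, Real.exp_zero] at h0
  nlinarith [h0]

lemma aux_sub (A B z x : ℝ) (hA1 : A ≤ 1) (hB0 : 0 ≤ B) (hz0 : 0 < z) (hz1 : z ≤ 1)
    (hxz : 2 * (1 - z) ≤ x * (1 + z)) (h1 : A * z ≤ B) (h2 : (1 - B) * z ≤ 1 - A) :
    A - B ≤ x / 2 := by
  have e1 : A - B ≤ A * (1 - z) := by nlinarith
  have e2 : A - B ≤ (1 - B) * (1 - z) := by nlinarith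
  nlinarith [e1, e2]

set_option maxHeartbeats 1000000 in
/-- The Boltzmann (softmax) map with temperature `γ` is `γ`-Lipschitz from the maximum
norm to each coordinate: for all vectors `P, P̂ ∈ ℝ^M` (`M ≥ 1`) and every index `m`,
`|softmax(P)_m − softmax(P̂)_m| ≤ γ · max_{m'} |P_{m'} − P̂_{m'}|`. -/
theorem stmt_18 (γ : ℝ) (hγ : 0 < γ) (M : ℕ)
    (P Phat : Fin (M + 1) → ℝ) (m : Fin (M + 1)) :
    |Real.exp (γ * P m) / (∑ m', Real.exp (γ * P m')) -
        Real.exp (γ * Phat m) / (∑ m', Real.exp (γ * Phat m'))| ≤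
      γ * Finset.univ.sup' Finset.univ_nonempty (fun m' => |P m' - Phat m'|) := by
  set D := Finset.univ.sup' Finset.univ_nonempty (fun m' => |P m' - Phat m'|) with hD
  have hDk : ∀ k, |P k - Phat k| ≤ D := fun k => by
    rw [hD]; exact Finset.le_sup' (fun m' => |P m' - Phat m'|) (Finset.mem_univ k)
  have hD0 : 0 ≤ D := le_trans (abs_nonneg _) (hDk m)
  set S := ∑ m', Real.exp (γ * P m') with hSdef
  set T := ∑ m', Real.exp (γ * Phat m') with hTdef
  have hS : 0 < S := Finset.sum_pos (fun i _ => Real.exp_pos _) Finset.univ_nonempty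
  have hT : 0 < T := Finset.sum_pos (fun i _ => Real.exp_pos _) Finset.univ_nonempty
  set A := Real.exp (γ * P m) / S with hAdef
  set B := Real.exp (γ * Phat m) / T with hBdef
  have hA1 : A ≤ 1 := by
    rw [hAdef, div_le_one hS]
    exact Finset.single_le_sum (f := fun k => Real.exp (γ * P k))
      (fun i _ => (Real.exp_pos _).le) (Finset.mem_univ m)
  have hB1 : B ≤ 1 := by
    rw [hBdef, div_le_one hT]
    exact Finset.single_le_sum (f := fun k => Real.exp (γ * Phat k))
      (fun i _ => (Real.exp_pos _).le) (Finset.mem_univ m)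
  have hA0 : 0 ≤ A := div_nonneg (Real.exp_pos _).le hS.le
  have hB0 : 0 ≤ B := div_nonneg (Real.exp_pos _).le hT.le
  -- generic one-sided key facts
  have key1 : ∀ (Q R : Fin (M+1) → ℝ), (∀ k, |Q k - R k| ≤ D) →
      Real.exp (γ * Q m) / (∑ m', Real.exp (γ * Q m')) * Real.exp (-(2 * γ * D)) ≤
        Real.exp (γ * R m) / (∑ m', Real.exp (γ * R m')) := by
    intro Q R h
    have hSQ : 0 < ∑ m', Real.exp (γ * Q m') :=
      Finset.sum_pos (fun i _ => Real.exp_pos _) Finset.univ_nonempty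
    have hSR : 0 < ∑ m', Real.exp (γ * R m') :=
      Finset.sum_pos (fun i _ => Real.exp_pos _) Finset.univ_nonempty
    rw [div_mul_eq_mul_div, div_le_div_iff₀ hSQ hSR]
    have hR_le : (∑ m', Real.exp (γ * R m')) ≤ Real.exp (γ * D) * ∑ m', Real.exp (γ * Q m') := by
      rw [Finset.mul_sum]
      apply Finset.sum_le_sum
      intro i _
      rw [← Real.exp_add, Real.exp_le_exp]
      have h1 := (abs_le.mp (h i)).1
      nlinarith
    calc Real.exp (γ * Q m) * Real.exp (-(2 * γ * D)) * (∑ m', Real.exp (γ * R m'))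
        ≤ Real.exp (γ * Q m) * Real.exp (-(2 * γ * D)) *
            (Real.exp (γ * D) * ∑ m', Real.exp (γ * Q m')) := by
          apply mul_le_mul_of_nonneg_left hR_le
          positivity
      _ = Real.exp (γ * Q m + -(2 * γ * D) + γ * D) * ∑ m', Real.exp (γ * Q m') := by
          rw [Real.exp_add, Real.exp_add]; ring
      _ ≤ Real.exp (γ * R m) * ∑ m', Real.exp (γ * Q m') := by
          apply mul_le_mul_of_nonneg_right _ hSQ.le
          rw [Real.exp_le_exp]
          have h1 := (abs_le.mp (h m)).2
          nlinarith
  have key2 : ∀ (Q R : Fin (M+1) → ℝ), (∀ k, |Q k - R k| ≤ D) →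
      (1 - Real.exp (γ * Q m) / (∑ m', Real.exp (γ * Q m'))) * Real.exp (-(2 * γ * D)) ≤
        1 - Real.exp (γ * R m) / (∑ m', Real.exp (γ * R m')) := by
    intro Q R h
    have hSQ : 0 < ∑ m', Real.exp (γ * Q m') :=
      Finset.sum_pos (fun i _ => Real.exp_pos _) Finset.univ_nonempty
    have hSR : 0 < ∑ m', Real.exp (γ * R m') :=
      Finset.sum_pos (fun i _ => Real.exp_pos _) Finset.univ_nonempty
    have eQ : (∑ k ∈ Finset.univ.erase m, Real.exp (γ * Q k)) + Real.exp (γ * Q m)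
        = ∑ m', Real.exp (γ * Q m') := Finset.sum_erase_add _ _ (Finset.mem_univ m)
    have eR : (∑ k ∈ Finset.univ.erase m, Real.exp (γ * R k)) + Real.exp (γ * R m)
        = ∑ m', Real.exp (γ * R m') := Finset.sum_erase_add _ _ (Finset.mem_univ m)
    have fQ : 1 - Real.exp (γ * Q m) / (∑ m', Real.exp (γ * Q m'))
        = (∑ k ∈ Finset.univ.erase m, Real.exp (γ * Q k)) / (∑ m', Real.exp (γ * Q m')) := by
      field_simp
      linarith [eQ]
    have fR : 1 - Real.exp (γ * R m) / (∑ m', Real.exp (γ * R m'))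
        = (∑ k ∈ Finset.univ.erase m, Real.exp (γ * R k)) / (∑ m', Real.exp (γ * R m')) := by
      field_simp
      linarith [eR]
    rw [fQ, fR, div_mul_eq_mul_div, div_le_div_iff₀ hSQ hSR]
    have hnum : (∑ k ∈ Finset.univ.erase m, Real.exp (γ * Q k)) ≤
        Real.exp (γ * D) * ∑ k ∈ Finset.univ.erase m, Real.exp (γ * R k) := by
      rw [Finset.mul_sum]
      apply Finset.sum_le_sum
      intro i _
      rw [← Real.exp_add, Real.exp_le_exp]
      have h1 := (abs_le.mp (h i)).2
      nlinarith
    have hden : (∑ m', Real.exp (γ * R m')) ≤ Real.exp (γ * D) * ∑ m', Real.exp (γ * Q m') := by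
      rw [Finset.mul_sum]
      apply Finset.sum_le_sum
      intro i _
      rw [← Real.exp_add, Real.exp_le_exp]
      have h1 := (abs_le.mp (h i)).1
      nlinarith
    calc (∑ k ∈ Finset.univ.erase m, Real.exp (γ * Q k)) * Real.exp (-(2 * γ * D)) *
          (∑ m', Real.exp (γ * R m'))
        ≤ (Real.exp (γ * D) * ∑ k ∈ Finset.univ.erase m, Real.exp (γ * R k)) *
            Real.exp (-(2 * γ * D)) * (Real.exp (γ * D) * ∑ m', Real.exp (γ * Q m')) := by
          apply mul_le_mul
          · apply mul_le_mul_of_nonneg_right hnum (Real.exp_pos _).le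
          · exact hden
          · exact hSR.le
          · positivity
      _ = (Real.exp (γ * D) * Real.exp (-(2 * γ * D)) * Real.exp (γ * D)) *
            ((∑ k ∈ Finset.univ.erase m, Real.exp (γ * R k)) * ∑ m', Real.exp (γ * Q m')) := by
          ring
      _ = (∑ k ∈ Finset.univ.erase m, Real.exp (γ * R k)) * ∑ m', Real.exp (γ * Q m') := by
          rw [← Real.exp_add, ← Real.exp_add,
            show γ * D + -(2 * γ * D) + γ * D = 0 by ring, Real.exp_zero, one_mul]
  -- assemble
  have hz0 : (0:ℝ) < Real.exp (-(2 * γ * D)) := Real.exp_pos _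
  have hz1 : Real.exp (-(2 * γ * D)) ≤ 1 := by
    rw [Real.exp_le_one_iff]
    nlinarith
  have hxz : 2 * (1 - Real.exp (-(2 * γ * D))) ≤ 2 * γ * D * (1 + Real.exp (-(2 * γ * D))) := by
    have hae := aux_exp (2 * γ * D) (by positivity)
    have hmul := mul_le_mul_of_nonneg_right hae hz0.le
    have hinv : Real.exp (2 * γ * D) * Real.exp (-(2 * γ * D)) = 1 := by
      rw [← Real.exp_add]; norm_num
    nlinarith [hmul, hinv]
  have hswap : ∀ k, |Phat k - P k| ≤ D := fun k => by
    rw [abs_sub_comm]; exact hDk k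
  have hfwd : A - B ≤ (2 * γ * D) / 2 :=
    aux_sub A B _ _ hA1 hB0 hz0 hz1 hxz (key1 P Phat hDk) (key2 Phat P hswap)
  have hbwd : B - A ≤ (2 * γ * D) / 2 :=
    aux_sub B A _ _ hB1 hA0 hz0 hz1 hxz (key1 Phat P hswap) (key2 P Phat hDk)
  rw [abs_sub_le_iff]
  constructor <;> [skip; skip] <;> linarith
end
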